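/- Let Y be a real normed space, ε ∈ (0,1), and let τ : [0,∞) → [0,π/2] be a continuous nondecreasing function, differentiable at all but finitely many points of (0,∞), with 0 ≤ τ'(t) ≤ ε/t at every point of differentiability. Then for all x, y ∈ Y with ‖x‖ ≥ ‖y‖ > 0, one has 0 ≤ 2·sin((τ(‖x‖) − τ(‖y‖))/2) ≤ (ε/‖y‖)·‖x − y‖. -/

import Mathlib

open Real

/-- Mean value inequality allowing finitely many exceptional points. -/
lemma mvt_finite_exceptions (C : ℝ) (f : ℝ → ℝ) (S : Set ℝ) (hS : S.Finite) :
    ∀ a b : ℝ, a ≤ b → ContinuousOn f (Set.Icc a b) →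
      (∀ t ∈ Set.Ioo a b \ S, DifferentiableAt ℝ f t ∧ deriv f t ≤ C) →
      f b - f a ≤ C * (b - a) := by
  refine Set.Finite.induction_on S hS ?_ ?_
  · intro a b hab hcont hd
    rcases eq_or_lt_of_le hab with rfl | hab'
    · simp
    · obtain ⟨c, hc, hc'⟩ := exists_deriv_eq_slope f hab' hcont
        (fun t ht => ((hd t ⟨ht, Set.notMem_empty t⟩).1).differentiableWithinAt)
      have hC : deriv f c ≤ C := (hd c ⟨hc, Set.notMem_empty c⟩).2
      rw [hc'] at hC
      have hba : (0:ℝ) < b - a := by linarith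
      calc f b - f a = (f b - f a) / (b - a) * (b - a) := by field_simp
        _ ≤ C * (b - a) := by
            apply mul_le_mul_of_nonneg_right hC hba.le
  · intro s T hsT hT IH a b hab hcont hd
    by_cases hs : s ∈ Set.Ioo a b
    · have h1 : f s - f a ≤ C * (s - a) := by
        apply IH a s hs.1.le (hcont.mono (Set.Icc_subset_Icc le_rfl hs.2.le))
        intro t ht
        refine hd t ⟨⟨ht.1.1, ht.1.2.trans hs.2⟩, ?_⟩
        simp only [Set.mem_insert_iff]
        push_neg
        exact ⟨ne_of_lt ht.1.2, ht.2⟩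
      have h2 : f b - f s ≤ C * (b - s) := by
        apply IH s b hs.2.le (hcont.mono (Set.Icc_subset_Icc hs.1.le le_rfl))
        intro t ht
        refine hd t ⟨⟨hs.1.trans ht.1.1, ht.1.2⟩, ?_⟩
        simp only [Set.mem_insert_iff]
        push_neg
        exact ⟨(ne_of_gt ht.1.1), ht.2⟩
      nlinarith
    · apply IH a b hab hcont
      intro t ht
      refine hd t ⟨ht.1, ?_⟩
      simp only [Set.mem_insert_iff]
      push_neg
      exact ⟨fun h => hs (h ▸ ht.1), ht.2⟩

/-- **The mean-value estimate for the gluing coefficient.**  If `τ : [0,∞) → [0,π/2]` is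
continuous, nondecreasing, differentiable at all but finitely many points of `(0,∞)`, with
`0 ≤ τ' ≤ ε/t` wherever it is differentiable, then for `‖x‖ ≥ ‖y‖ > 0` one has
`0 ≤ 2 sin((τ‖x‖ - τ‖y‖)/2) ≤ (ε/‖y‖) ‖x - y‖`. -/
theorem gluing_coefficient_estimate
    (Y : Type*) [NormedAddCommGroup Y] [NormedSpace ℝ Y]
    (ε : ℝ) (hε : ε ∈ Set.Ioo (0 : ℝ) 1)
    (τ : ℝ → ℝ)
    (hτrange : ∀ t ∈ Set.Ici (0 : ℝ), τ t ∈ Set.Icc 0 (π / 2))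
    (hτcont : ContinuousOn τ (Set.Ici 0))
    (hτmono : MonotoneOn τ (Set.Ici 0))
    (hτdiff : ∃ S : Set ℝ, S.Finite ∧ ∀ t ∈ Set.Ioi (0 : ℝ) \ S, DifferentiableAt ℝ τ t)
    (hτderiv : ∀ t : ℝ, 0 < t → DifferentiableAt ℝ τ t →
      0 ≤ deriv τ t ∧ deriv τ t ≤ ε / t)
    (x y : Y) (hy : 0 < ‖y‖) (hyx : ‖y‖ ≤ ‖x‖) :
    0 ≤ 2 * Real.sin ((τ ‖x‖ - τ ‖y‖) / 2) ∧
      2 * Real.sin ((τ ‖x‖ - τ ‖y‖) / 2) ≤ ε / ‖y‖ * ‖x - y‖ := by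
  obtain ⟨S, hSfin, hSdiff⟩ := hτdiff
  set a := ‖y‖
  set b := ‖x‖
  have ha : (0:ℝ) ≤ a := hy.le
  have hbpos : (0:ℝ) < b := lt_of_lt_of_le hy hyx
  have hs0 : 0 ≤ τ b - τ a := sub_nonneg.2 (hτmono (Set.mem_Ici.2 ha)
    (Set.mem_Ici.2 hbpos.le) hyx)
  have hsπ : τ b - τ a ≤ π / 2 := by
    have h1 := hτrange a (Set.mem_Ici.2 ha)
    have h2 := hτrange b (Set.mem_Ici.2 hbpos.le)
    have := h1.1; have := h2.2; linarith
  have hsin0 : 0 ≤ Real.sin ((τ b - τ a) / 2) := by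
    apply Real.sin_nonneg_of_nonneg_of_le_pi (by linarith)
    have := Real.pi_pos; linarith
  refine ⟨by linarith, ?_⟩
  -- 2 sin(s/2) ≤ s
  have h2sin : 2 * Real.sin ((τ b - τ a) / 2) ≤ τ b - τ a := by
    have := Real.sin_le (x := (τ b - τ a) / 2) (by linarith)
    linarith
  -- τ b - τ a ≤ (ε/a)(b - a)
  have hmvt : τ b - τ a ≤ ε / a * (b - a) := by
    apply mvt_finite_exceptions (ε / a) τ S hSfin a b hyx
      (hτcont.mono (fun t ht => le_trans ha ht.1))
    intro t ht
    have hta : a < t := ht.1.1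
    have htpos : 0 < t := lt_of_lt_of_le hy hta.le
    have hdiff : DifferentiableAt ℝ τ t := hSdiff t ⟨htpos, ht.2⟩
    refine ⟨hdiff, le_trans (hτderiv t htpos hdiff).2 ?_⟩
    exact div_le_div_of_nonneg_left hε.1.le hy hta.le
  have hba : b - a ≤ ‖x - y‖ := norm_sub_norm_le x y
  have hεa : 0 ≤ ε / a := div_nonneg hε.1.le ha
  calc 2 * Real.sin ((τ b - τ a) / 2) ≤ τ b - τ a := h2sin
    _ ≤ ε / a * (b - a) := hmvt
    _ ≤ ε / a * ‖x - y‖ := mul_le_mul_of_nonneg_left hba hεa
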